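/- (Theorem 3.1) Let K be an n×n real matrix that is diagonalizable with negative spectrum, i.e. K = QΓQ⁻¹ for some invertible real matrix Q and real diagonal matrix Γ all of whose diagonal entries are negative. Set A := I_{mn} − (Iinv·D) ⊗ K and P := I_{mn} − (S·D) ⊗ K, where ⊗ is the Kronecker product. Then P is invertible, the polynomial (X − 1)^{n(m−1)} divides the characteristic polynomial of P⁻¹A (so P⁻¹A has at least n(m−1) unit eigenvalues and at most n non-unit eigenvalues), and every complex eigenvalue of P⁻¹A is a real number lying in [1, ∞). -/

import Mathlib

open Matrix

/-- The sinc integrand `sin(πt)/(πt)`, extended by the value 1 at `t = 0`. -/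
noncomputable def sincFn (t : ℝ) : ℝ :=
  if t = 0 then 1 else Real.sin (Real.pi * t) / (Real.pi * t)

/-- The `m × m` Toeplitz matrix `Iinv(k,l) = 1/2 + ∫₀^{k-l} sin(πt)/(πt) dt`. -/
noncomputable def IinvMat (m : ℕ) : Matrix (Fin m) (Fin m) ℝ :=
  fun k l => 1 / 2 + ∫ t in (0 : ℝ)..((k : ℝ) - (l : ℝ)), sincFn t

/-- The skew-symmetric part `S = (Iinv - Iinvᵀ)/2`. -/
noncomputable def Smat (m : ℕ) : Matrix (Fin m) (Fin m) ℝ :=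
  (2 : ℝ)⁻¹ • (IinvMat m - (IinvMat m)ᵀ)

/-- The all-ones vector `e ∈ ℝ^m`. -/
def eVec (m : ℕ) : Fin m → ℝ := fun _ => 1

section Helpers

open Finset Kronecker

lemma sincFn_neg (t : ℝ) : sincFn (-t) = sincFn t := by
  unfold sincFn
  rcases eq_or_ne t 0 with h | h
  · simp [h]
  · rw [if_neg (neg_ne_zero.mpr h), if_neg h]
    rw [mul_neg, Real.sin_neg, neg_div_neg_eq]

lemma integral_sincFn_neg (a : ℝ) :
    (∫ t in (0:ℝ)..(-a), sincFn t) = - ∫ t in (0:ℝ)..a, sincFn t := by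
  have h := intervalIntegral.integral_comp_neg (a := (0:ℝ)) (b := a) (f := sincFn)
  simp only [neg_zero] at h
  have h2 : (∫ t in (0:ℝ)..a, sincFn (-t)) = ∫ t in (0:ℝ)..a, sincFn t := by
    simp [sincFn_neg]
  rw [h2] at h
  rw [h, intervalIntegral.integral_symm]

lemma IinvMat_add_symm (m : ℕ) (k l : Fin m) : IinvMat m k l + IinvMat m l k = 1 := by
  unfold IinvMat
  have : ((l : ℝ) - (k : ℝ)) = -((k : ℝ) - (l : ℝ)) := by ring
  rw [this, integral_sincFn_neg]
  ring

lemma IinvMat_eq (m : ℕ) :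
    IinvMat m = Smat m + (2:ℝ)⁻¹ • vecMulVec (eVec m) (eVec m) := by
  ext k l
  have h := IinvMat_add_symm m k l
  simp only [Smat, Matrix.add_apply, Matrix.smul_apply, Matrix.sub_apply, Matrix.transpose_apply,
    vecMulVec_apply, eVec, smul_eq_mul]
  nlinarith [h]

lemma Smat_transpose (m : ℕ) : (Smat m)ᵀ = - Smat m := by
  unfold Smat
  ext k l
  simp [Matrix.transpose_apply]
  ring

variable {R : Type*} [CommRing R] {ι : Type*} [DecidableEq ι] [Fintype ι]

lemma det_add_vecMulVec (M : Matrix ι ι R) (u v : ι → R) :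
    det (M + vecMulVec u v) = det M + ∑ i, u i * det (M.updateRow i v) := by
  classical
  let f := (detRowAlternating : (ι → R) [⋀^ι]→ₗ[R] R)
  have hdet : ∀ (N : Matrix ι ι R), det N = f.toMultilinearMap (fun i => N i) := fun _ => rfl
  set W : ι → ι → R := fun i => u i • v with hWdef
  have harg : (fun i => (M + vecMulVec u v) i) = (fun i => M i) + W := by
    funext i; funext j
    simp [vecMulVec_apply, smul_eq_mul, W, Matrix.add_apply]
  rw [hdet, harg, f.toMultilinearMap.map_add_univ (fun i => M i) W]
  have hvanish : ∀ s : Finset ι, s ∉ insert (univ : Finset ι)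
      ((univ : Finset ι).image fun i => ({i}ᶜ : Finset ι)) →
      f.toMultilinearMap (s.piecewise (fun i => M i) W) = 0 := by
    intro s hs
    simp only [mem_insert, mem_image, mem_univ, true_and, not_or, not_exists] at hs
    obtain ⟨hs1, hs2⟩ := hs
    have h2 : 1 < (sᶜ : Finset ι).card := by
      rcases Nat.lt_or_ge 1 (sᶜ : Finset ι).card with h | h
      · exact h
      · exfalso
        interval_cases h' : (sᶜ : Finset ι).card
        · exact hs1 (by simpa [Finset.compl_eq_empty_iff] using Finset.card_eq_zero.mp h')
        · obtain ⟨i, hi⟩ := Finset.card_eq_one.mp h'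
          exact hs2 i (by rw [← hi, compl_compl])
    obtain ⟨i, hi, j, hj, hij⟩ := Finset.one_lt_card.mp h2
    rw [Finset.mem_compl] at hi hj
    set g : ι → ι → R := s.piecewise (fun i => M i) W with hg
    have hgi : g i = u i • v := by simp [g, Finset.piecewise_eq_of_notMem _ _ _ hi, W]
    have hgj : g j = u j • v := by simp [g, Finset.piecewise_eq_of_notMem _ _ _ hj, W]
    have e1 : f.toMultilinearMap g = u i * f.toMultilinearMap (Function.update g i v) := by
      conv_lhs => rw [← Function.update_eq_self i g, hgi]
      rw [f.toMultilinearMap.map_update_smul g i (u i) v]; rfl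
    have e2 : f.toMultilinearMap (Function.update g i v) =
        u j * f.toMultilinearMap (Function.update (Function.update g i v) j v) := by
      have hjv : Function.update g i v j = u j • v := by
        rw [Function.update_of_ne hij.symm]; exact hgj
      conv_lhs => rw [← Function.update_eq_self j (Function.update g i v), hjv]
      rw [f.toMultilinearMap.map_update_smul _ j (u j) v]; rfl
    have e3 : f.toMultilinearMap (Function.update (Function.update g i v) j v) = 0 := by
      have := f.map_eq_zero_of_eq (Function.update (Function.update g i v) j v)
        (i := i) (j := j) ?_ hij
      · exact this
      · rw [Function.update_of_ne hij, Function.update_self, Function.update_self]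
    rw [e1, e2, e3, mul_zero, mul_zero]
  rw [(Finset.sum_subset (Finset.subset_univ _) (fun s _ hs => hvanish s hs)).symm]
  have huniv : (univ : Finset ι) ∉ (univ : Finset ι).image (fun i => ({i}ᶜ : Finset ι)) := by
    simp only [mem_image, mem_univ, true_and, not_exists]
    intro i h
    have : i ∈ ({i}ᶜ : Finset ι) := h ▸ Finset.mem_univ i
    simp at this
  rw [Finset.sum_insert huniv]
  have h1 : f.toMultilinearMap ((univ : Finset ι).piecewise (fun i => M i) W) = det M := by
    rw [Finset.piecewise_univ]; exact (hdet M).symm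
  rw [h1]
  congr 1
  rw [Finset.sum_image (by intro a _ b _ h; simpa using congrArg (fun t => (tᶜ : Finset ι)) h)]
  apply Finset.sum_congr rfl
  intro i _
  have hpc : ({i}ᶜ : Finset ι).piecewise (fun k => M k) W
      = Function.update (fun k => M k) i (u i • v) := by
    funext k
    rcases eq_or_ne k i with rfl | hk
    · rw [Finset.piecewise_eq_of_notMem _ _ _ (by simp), Function.update_self]
    · rw [Finset.piecewise_eq_of_mem _ _ _ (by simp [hk]), Function.update_of_ne hk]
  rw [hpc, f.toMultilinearMap.map_update_smul _ i (u i) v, smul_eq_mul]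
  have hupd : Function.update (fun k => M k) i v = fun k => (M.updateRow i v) k := by
    funext k
    rcases eq_or_ne k i with rfl | hk
    · rw [Function.update_self, Matrix.updateRow_self]
    · rw [Function.update_of_ne hk]
      exact (Matrix.updateRow_ne hk).symm
  rw [hupd, ← hdet]

lemma dvd_det_smul_add_vecMulVec (r : R) (N : Matrix ι ι R) (u v : ι → R) :
    r ^ (Fintype.card ι - 1) ∣ det (r • N + vecMulVec u v) := by
  classical
  rcases isEmpty_or_nonempty ι with h | h
  · simp [det_isEmpty]
  rw [det_add_vecMulVec]
  apply dvd_add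
  · rw [det_smul]
    exact Dvd.dvd.mul_right (pow_dvd_pow r (Nat.sub_le _ _)) _
  · apply Finset.dvd_sum
    intro i _
    have hrow : (r • N).updateRow i v = Matrix.of fun k j =>
        (if k = i then 1 else r) * (N.updateRow i v) k j := by
      ext k j
      rcases eq_or_ne k i with rfl | hk
      · simp [Matrix.updateRow_self]
      · simp [Matrix.updateRow_ne hk, hk]
    rw [hrow, Matrix.det_mul_column]
    have : ∏ k, (if k = i then 1 else r) = r ^ (Fintype.card ι - 1) := by
      rw [← Finset.mul_prod_erase univ _ (mem_univ i), if_pos rfl, one_mul]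
      rw [Finset.prod_congr rfl (fun k hk => if_neg (Finset.ne_of_mem_erase hk))]
      rw [Finset.prod_const, Finset.card_erase_of_mem (mem_univ i), Finset.card_univ]
    rw [this]
    exact (dvd_mul_right _ _).mul_left _

variable {m n : ℕ}

lemma smul_one_sub_kron_diag (c : R) (B : Matrix (Fin m) (Fin m) R) (g : Fin n → R) :
    c • (1 : Matrix (Fin m × Fin n) (Fin m × Fin n) R) - B ⊗ₖ Matrix.diagonal g
      = Matrix.blockDiagonal (fun j => c • (1 : Matrix (Fin m) (Fin m) R) - g j • B) := by
  ext ⟨k, j⟩ ⟨l, j'⟩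
  rcases eq_or_ne j j' with rfl | hj
  · simp [Matrix.blockDiagonal_apply, Matrix.one_apply, Prod.ext_iff, kroneckerMap_apply,
      Matrix.diagonal_apply_eq, mul_comm]
  · simp [Matrix.blockDiagonal_apply, Matrix.one_apply, Prod.ext_iff, hj, kroneckerMap_apply,
      Matrix.diagonal_apply_ne _ hj]

lemma kron_diag_mulVec (B : Matrix (Fin m) (Fin m) R) (g : Fin n → R)
    (η : Fin m × Fin n → R) (k : Fin m) (j : Fin n) :
    ((B ⊗ₖ Matrix.diagonal g) *ᵥ η) (k, j) = g j * ∑ l, B k l * η (l, j) := by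
  simp only [Matrix.mulVec, dotProduct, Fintype.sum_prod_type, kroneckerMap_apply]
  rw [Finset.mul_sum]
  apply Finset.sum_congr rfl
  intro l _
  rw [Finset.sum_eq_single j]
  · simp [Matrix.diagonal_apply_eq]; ring
  · intro b _ hb
    simp [Matrix.diagonal_apply_ne' _ hb]
  · simp

lemma map_kron {S : Type*} [CommRing S] (f : R →+* S) (A : Matrix (Fin m) (Fin m) R)
    (B : Matrix (Fin n) (Fin n) R) : (A ⊗ₖ B).map f = (A.map f) ⊗ₖ (B.map f) := by
  ext ⟨k, j⟩ ⟨l, j'⟩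
  simp [kroneckerMap_apply, Matrix.map_apply]

lemma dot_skew {κ : Type*} [Fintype κ] (M : Matrix κ κ ℝ) (h : Mᵀ = -M) (x : κ → ℝ) :
    x ⬝ᵥ (M *ᵥ x) = 0 := by
  have h1 : x ⬝ᵥ (M *ᵥ x) = (Mᵀ *ᵥ x) ⬝ᵥ x := by
    rw [Matrix.dotProduct_mulVec, Matrix.mulVec_transpose]
  have h2 : (Mᵀ *ᵥ x) ⬝ᵥ x = -(x ⬝ᵥ (M *ᵥ x)) := by
    rw [h, Matrix.neg_mulVec, neg_dotProduct, dotProduct_comm]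
  linarith [h1, h2]

lemma SD_dot_D (S : Matrix (Fin m) (Fin m) ℝ) (hS : Sᵀ = -S) (d : Fin m → ℝ) (y : Fin m → ℝ) :
    ((S * Matrix.diagonal d) *ᵥ y) ⬝ᵥ ((Matrix.diagonal d) *ᵥ y) = 0 := by
  have h1 : y ⬝ᵥ (((S * Matrix.diagonal d)ᵀ * Matrix.diagonal d) *ᵥ y)
      = ((S * Matrix.diagonal d) *ᵥ y) ⬝ᵥ ((Matrix.diagonal d) *ᵥ y) := by
    rw [← Matrix.mulVec_mulVec, Matrix.dotProduct_mulVec, Matrix.vecMul_transpose]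
  rw [← h1]
  apply dot_skew
  have hN : (S * Matrix.diagonal d)ᵀ * Matrix.diagonal d
      = Matrix.diagonal d * Sᵀ * Matrix.diagonal d := by
    rw [Matrix.transpose_mul, Matrix.diagonal_transpose]
  have h3 : ((S * Matrix.diagonal d)ᵀ * Matrix.diagonal d)ᵀ
      = Matrix.diagonal d * (S * Matrix.diagonal d) := by
    rw [hN, Matrix.transpose_mul, Matrix.transpose_mul, Matrix.diagonal_transpose,
      Matrix.transpose_transpose]
  have h4 : -((S * Matrix.diagonal d)ᵀ * Matrix.diagonal d)
      = Matrix.diagonal d * (S * Matrix.diagonal d) := by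
    rw [hN, hS]
    simp [Matrix.mul_neg, Matrix.neg_mul, Matrix.mul_assoc]
  rw [h3, h4]

lemma real_kernel (S : Matrix (Fin m) (Fin m) ℝ) (hS : Sᵀ = -S) (d : Fin m → ℝ)
    (hd : ∀ j, 0 < d j) (γ : ℝ) (x : Fin m → ℝ)
    (hx : x = γ • ((S * Matrix.diagonal d) *ᵥ x)) : x = 0 := by
  have hq : x ⬝ᵥ ((Matrix.diagonal d) *ᵥ x) = 0 := by
    have h0 : x ⬝ᵥ ((Matrix.diagonal d) *ᵥ x)
        = (γ • ((S * Matrix.diagonal d) *ᵥ x)) ⬝ᵥ ((Matrix.diagonal d) *ᵥ x) := by rw [← hx]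
    rw [h0, smul_dotProduct, SD_dot_D S hS d x, smul_zero]
  have hq2 : ∑ k, d k * x k ^ 2 = 0 := by
    rw [← hq]
    simp only [dotProduct, Matrix.mulVec_diagonal]
    apply Finset.sum_congr rfl
    intro k _
    ring
  funext k
  have hnn : ∀ k ∈ univ, 0 ≤ d k * x k ^ 2 :=
    fun k _ => mul_nonneg (le_of_lt (hd k)) (sq_nonneg _)
  have hk := (Finset.sum_eq_zero_iff_of_nonneg hnn).mp hq2 k (mem_univ k)
  have hdk := hd k
  have : x k ^ 2 = 0 := by
    rcases mul_eq_zero.mp hk with h | h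
    · linarith
    · exact h
  simpa using pow_eq_zero_iff (n := 2) (by norm_num) |>.mp this

lemma mulVec_map_re (N : Matrix (Fin m) (Fin m) ℝ) (x : Fin m → ℂ) (k : Fin m) :
    (((N.map (Complex.ofReal)) *ᵥ x) k).re = (N *ᵥ fun l => (x l).re) k := by
  simp [Matrix.mulVec, dotProduct, Complex.re_sum, Complex.mul_re]

lemma mulVec_map_im (N : Matrix (Fin m) (Fin m) ℝ) (x : Fin m → ℂ) (k : Fin m) :
    (((N.map (Complex.ofReal)) *ᵥ x) k).im = (N *ᵥ fun l => (x l).im) k := by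
  simp [Matrix.mulVec, dotProduct, Complex.im_sum, Complex.mul_im]

lemma map_mul_ofReal {ι : Type*} [Fintype ι] [DecidableEq ι] (M N : Matrix ι ι ℝ) :
    (M * N).map Complex.ofReal = M.map Complex.ofReal * N.map Complex.ofReal := by
  refine Matrix.ext fun p q => ?_
  simp [Matrix.mul_apply, Matrix.map_apply]

lemma map_one_ofReal {ι : Type*} [Fintype ι] [DecidableEq ι] :
    (1 : Matrix ι ι ℝ).map Complex.ofReal = 1 :=
  Matrix.map_one _ Complex.ofReal_zero Complex.ofReal_one

end Helpers

open Polynomial Kronecker in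
theorem stmt8 (m n : ℕ) (hm : 1 ≤ m) (hn : 1 ≤ n) (d : Fin m → ℝ) (hd : ∀ j, 0 < d j)
    (K Q : Matrix (Fin n) (Fin n) ℝ) (Γ : Fin n → ℝ) (hQ : IsUnit Q)
    (hΓ : ∀ j, Γ j < 0) (hK : K = Q * Matrix.diagonal Γ * Q⁻¹) :
    let D : Matrix (Fin m) (Fin m) ℝ := Matrix.diagonal d
    let A : Matrix (Fin m × Fin n) (Fin m × Fin n) ℝ := 1 - (IinvMat m * D) ⊗ₖ K
    let P : Matrix (Fin m × Fin n) (Fin m × Fin n) ℝ := 1 - (Smat m * D) ⊗ₖ K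
    IsUnit P ∧
      ((X - 1) ^ (n * (m - 1)) ∣ (P⁻¹ * A).charpoly) ∧
      ∀ (lam : ℂ) (ξ : Fin m × Fin n → ℂ), ξ ≠ 0 →
        ((P⁻¹ * A).map Complex.ofReal).mulVec ξ = lam • ξ →
        lam.im = 0 ∧ 1 ≤ lam.re := by
  intro D A P
  have hSkew : (Smat m)ᵀ = -(Smat m) := Smat_transpose m
  set SD : Matrix (Fin m) (Fin m) ℝ := Smat m * D with hSD
  set ID : Matrix (Fin m) (Fin m) ℝ := IinvMat m * D with hIDdef
  set W : Matrix (Fin m) (Fin m) ℝ := (2:ℝ)⁻¹ • (vecMulVec (eVec m) (eVec m) * D) with hW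
  have hID : ID = SD + W := by
    rw [hIDdef, IinvMat_eq m, Matrix.add_mul, Matrix.smul_mul]
  have hWapp : ∀ k l, W k l = 2⁻¹ * d l := by
    intro k l
    simp [hW, vecMulVec_apply, eVec, Matrix.mul_apply, D, Matrix.diagonal_apply,
      Finset.sum_ite_eq, smul_eq_mul]
  have hIDe : ∀ k l, (IinvMat m * D) k l = SD k l + W k l := by
    intro k l
    have h1 := congrFun (congrFun hID k) l
    rw [hIDdef] at h1
    simpa [Matrix.add_apply] using h1
  have hIDe' : ∀ k l, ID k l = SD k l + W k l := by
    intro k l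
    rw [hIDdef]; exact hIDe k l
  -- single-block invertibility over ℝ
  have hblock_ker : ∀ (γ : ℝ) (x : Fin m → ℝ), ((1 : Matrix (Fin m) (Fin m) ℝ) - γ • SD) *ᵥ x = 0
      → x = 0 := by
    intro γ x hx
    apply real_kernel (Smat m) hSkew d hd γ x
    rw [Matrix.sub_mulVec, Matrix.one_mulVec, smul_mulVec, sub_eq_zero] at hx
    exact hx
  have hblock_det : ∀ γ : ℝ, ((1 : Matrix (Fin m) (Fin m) ℝ) - γ • SD).det ≠ 0 := by
    intro γ hdet0
    obtain ⟨v, hv0, hv⟩ := (Matrix.exists_mulVec_eq_zero_iff).mpr hdet0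
    exact hv0 (hblock_ker γ v hv)
  -- Q inverse facts
  have hQdet : IsUnit Q.det := (Matrix.isUnit_iff_isUnit_det Q).mp hQ
  have hQQ' : Q * Q⁻¹ = 1 := Matrix.mul_nonsing_inv Q hQdet
  have hQ'Q : Q⁻¹ * Q = 1 := Matrix.nonsing_inv_mul Q hQdet
  -- Kronecker transfer matrices
  set UQ : Matrix (Fin m × Fin n) (Fin m × Fin n) ℝ := (1 : Matrix (Fin m) (Fin m) ℝ) ⊗ₖ Q
    with hUQ
  set UQ' : Matrix (Fin m × Fin n) (Fin m × Fin n) ℝ := (1 : Matrix (Fin m) (Fin m) ℝ) ⊗ₖ Q⁻¹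
    with hUQ'
  have hUU' : UQ * UQ' = 1 := by
    rw [hUQ, hUQ', ← Matrix.mul_kronecker_mul, Matrix.one_mul, hQQ', Matrix.one_kronecker_one]
  have hU'U : UQ' * UQ = 1 := by
    rw [hUQ, hUQ', ← Matrix.mul_kronecker_mul, Matrix.one_mul, hQ'Q, Matrix.one_kronecker_one]
  have hconj : ∀ B : Matrix (Fin m) (Fin m) ℝ,
      B ⊗ₖ K = UQ * (B ⊗ₖ Matrix.diagonal Γ) * UQ' := by
    intro B
    rw [hUQ, hUQ', ← Matrix.mul_kronecker_mul, ← Matrix.mul_kronecker_mul, hK]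
    rw [Matrix.one_mul, Matrix.mul_one]
  have hPconj : P = UQ * ((1 : Matrix (Fin m × Fin n) (Fin m × Fin n) ℝ)
      - SD ⊗ₖ Matrix.diagonal Γ) * UQ' := by
    rw [Matrix.mul_sub, Matrix.sub_mul, Matrix.mul_one, hUU', ← hconj]
  have hblockP : (1 : Matrix (Fin m × Fin n) (Fin m × Fin n) ℝ) - SD ⊗ₖ Matrix.diagonal Γ
      = Matrix.blockDiagonal (fun j => 1 - Γ j • SD) := by
    have := smul_one_sub_kron_diag (1 : ℝ) SD Γ
    rw [one_smul] at this
    rw [this]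
    congr 1
    funext j
    rw [one_smul]
  have hdetP : P.det = ∏ j, ((1 : Matrix (Fin m) (Fin m) ℝ) - Γ j • SD).det := by
    rw [hPconj, Matrix.det_mul, Matrix.det_mul, mul_right_comm, ← Matrix.det_mul, hUU',
      Matrix.det_one, one_mul, hblockP, Matrix.det_blockDiagonal]
  have hdetPne : P.det ≠ 0 := by
    rw [hdetP]
    exact Finset.prod_ne_zero_iff.mpr fun j _ => hblock_det (Γ j)
  have hPunit : IsUnit P := (Matrix.isUnit_iff_isUnit_det P).mpr (isUnit_iff_ne_zero.mpr hdetPne)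
  have hPPinv : P * P⁻¹ = 1 := Matrix.mul_nonsing_inv P (isUnit_iff_ne_zero.mpr hdetPne)
  refine ⟨hPunit, ?_, ?_⟩
  · -- charpoly divisibility
    classical
    set B := P⁻¹ * A with hB
    have hPB : P * B = A := by rw [hB, ← Matrix.mul_assoc, hPPinv, Matrix.one_mul]
    set Cp := (Polynomial.C : ℝ →+* ℝ[X]) with hCp
    have hcharm : charmatrix B = Matrix.scalar _ (X : ℝ[X]) - Cp.mapMatrix B := rfl
    have hcm : Cp.mapMatrix P * charmatrix B
        = (X : ℝ[X]) • Cp.mapMatrix P - Cp.mapMatrix A := by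
      rw [hcharm, Matrix.mul_sub]
      congr 1
      · rw [Matrix.scalar_apply, ← Matrix.smul_one_eq_diagonal, mul_smul_comm, Matrix.mul_one]
      · rw [← _root_.map_mul, hPB]
    have hdetkey : Cp P.det * B.charpoly
        = ((X : ℝ[X]) • Cp.mapMatrix P - Cp.mapMatrix A).det := by
      have h1 : B.charpoly = (charmatrix B).det := rfl
      rw [h1, RingHom.map_det, ← Matrix.det_mul, hcm]

    -- mapped matrices
    set SDc : Matrix (Fin m) (Fin m) ℝ[X] := SD.map Cp with hSDc
    set Wc : Matrix (Fin m) (Fin m) ℝ[X] := W.map Cp with hWc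
    set Gc : Matrix (Fin m) (Fin m) ℝ[X] := ((X : ℝ[X]) - 1) • SDc - Wc with hGc
    have hGce : ∀ k l, Gc k l = ((X : ℝ[X]) - 1) * Cp (SD k l) - Cp (W k l) := by
      intro k l
      simp [hGc, hSDc, hWc, Matrix.sub_apply, Matrix.smul_apply, Matrix.map_apply, smul_eq_mul]
    have hPap : ∀ p q, P p q
        = (if p = q then (1:ℝ) else 0) - SD p.1 q.1 * K p.2 q.2 := by
      intro p q
      obtain ⟨k, j⟩ := p; obtain ⟨l, j'⟩ := q
      simp [P, hSD, Matrix.sub_apply, Matrix.one_apply, kroneckerMap_apply]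
    have hAap : ∀ p q, A p q
        = (if p = q then (1:ℝ) else 0) - (SD p.1 q.1 + W p.1 q.1) * K p.2 q.2 := by
      intro p q
      obtain ⟨k, j⟩ := p; obtain ⟨l, j'⟩ := q
      simp only [A, Matrix.sub_apply, Matrix.one_apply, kroneckerMap_apply]
      rw [← hIDe k l]
    have step1 : (X : ℝ[X]) • Cp.mapMatrix P - Cp.mapMatrix A
        = ((X : ℝ[X]) - 1) • (1 : Matrix (Fin m × Fin n) (Fin m × Fin n) ℝ[X])
          - Gc ⊗ₖ (K.map Cp) := by
      refine Matrix.ext fun p q => ?_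
      simp only [RingHom.mapMatrix_apply, Matrix.smul_apply, Matrix.sub_apply, Matrix.map_apply,
        Matrix.one_apply, kroneckerMap_apply, smul_eq_mul, hPap, hAap, hGce]
      split_ifs <;>
        simp only [_root_.map_add, _root_.map_mul, _root_.map_sub, _root_.map_one, _root_.map_zero, one_div] <;> ring
    -- conjugation over ℝ[X]
    have hQcQ'c : Q.map Cp * (Q⁻¹).map Cp = 1 := by
      rw [← _root_.Matrix.map_mul, hQQ', _root_.Matrix.map_one _ (map_zero Cp) (map_one Cp)]
    have hKc : K.map Cp = Q.map Cp * Matrix.diagonal (fun j => Cp (Γ j)) * (Q⁻¹).map Cp := by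
      rw [hK, _root_.Matrix.map_mul, _root_.Matrix.map_mul, Matrix.diagonal_map (map_zero Cp)]
    have hUQc : UQ.map Cp = (1 : Matrix (Fin m) (Fin m) ℝ[X]) ⊗ₖ (Q.map Cp) := by
      rw [hUQ, map_kron, _root_.Matrix.map_one _ (map_zero Cp) (map_one Cp)]
    have hUQ'c : UQ'.map Cp = (1 : Matrix (Fin m) (Fin m) ℝ[X]) ⊗ₖ ((Q⁻¹).map Cp) := by
      rw [hUQ', map_kron, _root_.Matrix.map_one _ (map_zero Cp) (map_one Cp)]
    have hUcUc' : UQ.map Cp * UQ'.map Cp = 1 := by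
      rw [hUQc, hUQ'c, ← Matrix.mul_kronecker_mul, Matrix.one_mul, hQcQ'c,
        Matrix.one_kronecker_one]
    have hconjc : Gc ⊗ₖ (K.map Cp)
        = UQ.map Cp * (Gc ⊗ₖ Matrix.diagonal (fun j => Cp (Γ j))) * UQ'.map Cp := by
      rw [hUQc, hUQ'c, ← Matrix.mul_kronecker_mul, ← Matrix.mul_kronecker_mul, hKc,
        Matrix.one_mul, Matrix.mul_one]
    have step2 : ((X : ℝ[X]) - 1) • (1 : Matrix (Fin m × Fin n) (Fin m × Fin n) ℝ[X])
          - Gc ⊗ₖ (K.map Cp)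
        = UQ.map Cp * (Matrix.blockDiagonal
            (fun j => ((X : ℝ[X]) - 1) • 1 - Cp (Γ j) • Gc)) * UQ'.map Cp := by
      rw [← smul_one_sub_kron_diag ((X : ℝ[X]) - 1) Gc (fun j => Cp (Γ j))]
      rw [Matrix.mul_sub, Matrix.sub_mul, ← hconjc]
      congr 1
      rw [mul_smul_comm, Matrix.mul_one, Matrix.smul_mul, hUcUc']
    have hdvd_block : ∀ j : Fin n, ((X : ℝ[X]) - 1) ^ (m - 1)
        ∣ (((X : ℝ[X]) - 1) • (1 : Matrix (Fin m) (Fin m) ℝ[X]) - Cp (Γ j) • Gc).det := by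
      intro j
      have hblk : ((X : ℝ[X]) - 1) • (1 : Matrix (Fin m) (Fin m) ℝ[X]) - Cp (Γ j) • Gc
          = ((X : ℝ[X]) - 1) • ((1 : Matrix (Fin m) (Fin m) ℝ[X]) - Cp (Γ j) • SDc)
            + vecMulVec (fun _ => (1 : ℝ[X])) (fun l => Cp (Γ j * (2⁻¹ * d l))) := by
        refine Matrix.ext fun k l => ?_
        have hSDce : SDc k l = Cp (SD k l) := by simp [hSDc, Matrix.map_apply]
        simp only [Matrix.smul_apply, Matrix.sub_apply, Matrix.add_apply, Matrix.one_apply,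
          vecMulVec_apply, smul_eq_mul, hGce, hWapp, hSDce]
        split_ifs <;>
          simp only [_root_.map_add, _root_.map_mul, _root_.map_sub, _root_.map_one, _root_.map_zero, one_mul, one_div] <;> ring
      rw [hblk]
      have hdvd := dvd_det_smul_add_vecMulVec ((X : ℝ[X]) - 1)
        ((1 : Matrix (Fin m) (Fin m) ℝ[X]) - Cp (Γ j) • SDc)
        (fun _ => (1 : ℝ[X])) (fun l => Cp (Γ j * (2⁻¹ * d l)))
      simpa [Fintype.card_fin] using hdvd
    have hdvd_prod : ((X : ℝ[X]) - 1) ^ (n * (m - 1))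
        ∣ (Matrix.blockDiagonal (fun j : Fin n =>
            ((X : ℝ[X]) - 1) • (1 : Matrix (Fin m) (Fin m) ℝ[X]) - Cp (Γ j) • Gc)).det := by
      rw [Matrix.det_blockDiagonal]
      have hpow : ((X : ℝ[X]) - 1) ^ (n * (m - 1))
          = ∏ _j : Fin n, ((X : ℝ[X]) - 1) ^ (m - 1) := by
        rw [Finset.prod_const, Finset.card_univ, Fintype.card_fin, ← pow_mul, mul_comm]
      rw [hpow]
      exact Finset.prod_dvd_prod_of_dvd _ _ (fun j _ => hdvd_block j)
    have hdvd_all : ((X : ℝ[X]) - 1) ^ (n * (m - 1)) ∣ Cp P.det * B.charpoly := by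
      rw [hdetkey]
      have hPc : Cp.mapMatrix P = P.map Cp := rfl
      have hAc : Cp.mapMatrix A = A.map Cp := rfl
      rw [hPc, hAc] at step1 ⊢
      rw [step1, step2, Matrix.det_mul, Matrix.det_mul]
      exact (hdvd_prod.mul_left _).mul_right _
    have hu : IsUnit (Cp P.det) :=
      Polynomial.isUnit_C.mpr (isUnit_iff_ne_zero.mpr hdetPne)
    exact (hu.dvd_mul_left).mp hdvd_all
  · -- eigenvalues are real and ≥ 1
    intro lam ξ hξ heig
    classical
    by_cases hlam1 : lam = 1
    · subst hlam1; exact ⟨rfl, le_refl _⟩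
    have hPA : P * (P⁻¹ * A) = A := by rw [← Matrix.mul_assoc, hPPinv, Matrix.one_mul]
    have heig2 : (A.map Complex.ofReal) *ᵥ ξ = lam • ((P.map Complex.ofReal) *ᵥ ξ) := by
      calc (A.map Complex.ofReal) *ᵥ ξ
          = ((P * (P⁻¹ * A)).map Complex.ofReal) *ᵥ ξ := by rw [hPA]
        _ = (P.map Complex.ofReal) *ᵥ (((P⁻¹ * A).map Complex.ofReal) *ᵥ ξ) := by
            rw [map_mul_ofReal, Matrix.mulVec_mulVec]
        _ = (P.map Complex.ofReal) *ᵥ (lam • ξ) := by rw [heig]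
        _ = lam • ((P.map Complex.ofReal) *ᵥ ξ) := Matrix.mulVec_smul _ _ _
    -- conjugate by (1 ⊗ Q⁻¹)
    have hAconj : A = UQ * ((1 : Matrix (Fin m × Fin n) (Fin m × Fin n) ℝ)
        - ID ⊗ₖ Matrix.diagonal Γ) * UQ' := by
      rw [Matrix.mul_sub, Matrix.sub_mul, Matrix.mul_one, hUU', ← hconj]
    have hU'A : UQ' * A = ((1 : Matrix (Fin m × Fin n) (Fin m × Fin n) ℝ)
        - ID ⊗ₖ Matrix.diagonal Γ) * UQ' := by
      rw [hAconj, ← Matrix.mul_assoc, ← Matrix.mul_assoc, hU'U, Matrix.one_mul]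
    have hU'P : UQ' * P = ((1 : Matrix (Fin m × Fin n) (Fin m × Fin n) ℝ)
        - SD ⊗ₖ Matrix.diagonal Γ) * UQ' := by
      rw [hPconj, ← Matrix.mul_assoc, ← Matrix.mul_assoc, hU'U, Matrix.one_mul]
    set η : Fin m × Fin n → ℂ := (UQ'.map Complex.ofReal) *ᵥ ξ with hη
    have hη0 : η ≠ 0 := by
      intro h0
      apply hξ
      have : (UQ.map Complex.ofReal) *ᵥ η = ξ := by
        rw [hη, Matrix.mulVec_mulVec, ← map_mul_ofReal, hUU', map_one_ofReal, Matrix.one_mulVec]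
      rw [← this, h0, Matrix.mulVec_zero]
    have heig3 : (((1 : Matrix (Fin m × Fin n) (Fin m × Fin n) ℝ)
          - ID ⊗ₖ Matrix.diagonal Γ).map Complex.ofReal) *ᵥ η
        = lam • ((((1 : Matrix (Fin m × Fin n) (Fin m × Fin n) ℝ)
          - SD ⊗ₖ Matrix.diagonal Γ).map Complex.ofReal) *ᵥ η) := by
      rw [hη, Matrix.mulVec_mulVec, Matrix.mulVec_mulVec, ← map_mul_ofReal, ← map_mul_ofReal,
        ← hU'A, ← hU'P, map_mul_ofReal, map_mul_ofReal, ← Matrix.mulVec_mulVec,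
        ← Matrix.mulVec_mulVec, heig2, Matrix.mulVec_smul]
    -- entrywise block extraction
    have hmapsub : ∀ (B : Matrix (Fin m) (Fin m) ℝ),
        ((1 : Matrix (Fin m × Fin n) (Fin m × Fin n) ℝ) - B ⊗ₖ Matrix.diagonal Γ).map
            Complex.ofReal
          = (1 : Matrix (Fin m × Fin n) (Fin m × Fin n) ℂ)
            - (B.map Complex.ofReal) ⊗ₖ Matrix.diagonal (fun j => ((Γ j : ℝ) : ℂ)) := by
      intro B
      refine Matrix.ext fun p q => ?_
      simp only [Matrix.map_apply, Matrix.sub_apply, Matrix.one_apply, kroneckerMap_apply,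
        Matrix.diagonal_apply]
      split_ifs <;> push_cast <;> ring
    rw [hmapsub, hmapsub] at heig3
    -- pick a nonzero block
    have : ∃ p, η p ≠ 0 := by
      by_contra h
      push_neg at h
      exact hη0 (funext h)
    obtain ⟨⟨k0, j⟩, hp0⟩ := this
    set x : Fin m → ℂ := fun k => η (k, j) with hxdef
    have hx0 : x ≠ 0 := by
      intro h
      exact hp0 (congrFun h k0)
    set γ : ℝ := Γ j with hγdef
    have hγ : γ < 0 := hΓ j
    set SDc : Matrix (Fin m) (Fin m) ℂ := SD.map Complex.ofReal with hSDc
    set IDc : Matrix (Fin m) (Fin m) ℂ := ID.map Complex.ofReal with hIDc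
    set c : ℂ := ∑ l, ((d l : ℝ) : ℂ) * x l with hc
    have hblkeq : ∀ k, x k - (γ : ℂ) * ∑ l, IDc k l * x l
        = lam * (x k - (γ : ℂ) * ∑ l, SDc k l * x l) := by
      intro k
      have h1 := congrFun heig3 (k, j)
      simp only [Matrix.sub_mulVec, Matrix.one_mulVec, Pi.sub_apply, Pi.smul_apply,
        smul_eq_mul] at h1
      rw [kron_diag_mulVec, kron_diag_mulVec] at h1
      exact h1
    have hIDce : ∀ k l, IDc k l = SDc k l + ((2⁻¹ * d l : ℝ) : ℂ) := by
      intro k l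
      have h2 := hWapp k l
      simp only [hIDc, hSDc, Matrix.map_apply, hIDe k l, hIDe' k l, h2]
      push_cast
      ring
    set NC : Matrix (Fin m) (Fin m) ℂ := (1 : Matrix (Fin m) (Fin m) ℂ) - (γ : ℂ) • SDc
      with hNC
    have hNCapp : ∀ y : Fin m → ℂ, ∀ k, (NC *ᵥ y) k = y k - (γ : ℂ) * ∑ l, SDc k l * y l := by
      intro y k
      simp only [hNC, Matrix.sub_mulVec, Matrix.one_mulVec, smul_mulVec,
        Pi.sub_apply, Pi.smul_apply, smul_eq_mul]
      congr 1
    have hNCmap : NC = ((1 : Matrix (Fin m) (Fin m) ℝ) - γ • SD).map Complex.ofReal := by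
      refine Matrix.ext fun k l => ?_
      simp only [hNC, hSDc, Matrix.sub_apply, Matrix.smul_apply, Matrix.one_apply,
        Matrix.map_apply, smul_eq_mul]
      split_ifs <;> push_cast <;> ring
    have hkey : ∀ k, (1 - lam) * ((NC *ᵥ x) k) = (γ : ℂ) * 2⁻¹ * c := by
      intro k
      have h1 := hblkeq k
      have h2 : ∑ l, IDc k l * x l = (∑ l, SDc k l * x l) + 2⁻¹ * c := by
        rw [hc, Finset.mul_sum, ← Finset.sum_add_distrib]
        apply Finset.sum_congr rfl
        intro l _
        rw [hIDce k l]
        push_cast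
        ring
      rw [h2] at h1
      rw [hNCapp x k]
      linear_combination h1
    have hlam1' : (1 : ℂ) - lam ≠ 0 := sub_ne_zero.mpr (fun h => hlam1 h.symm)
    set ν : ℂ := (1 - lam)⁻¹ * ((γ : ℂ) * 2⁻¹ * c) with hν
    have hNx : NC *ᵥ x = fun _ => ν := by
      funext k
      have h1 := hkey k
      have h0 : (NC *ᵥ x) k = (1 - lam)⁻¹ * ((1 - lam) * ((NC *ᵥ x) k)) := by
        rw [← mul_assoc, inv_mul_cancel₀ hlam1', one_mul]
      rw [h0, h1, hν]
    by_cases hν0 : ν = 0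
    · exfalso
      have hNx0 : NC *ᵥ x = 0 := by
        rw [hNx, hν0]
        rfl
      have hNx0' : (((1 : Matrix (Fin m) (Fin m) ℝ) - γ • SD).map Complex.ofReal) *ᵥ x = 0 := by
        rw [← hNCmap]; exact hNx0
      have hre : ((1 : Matrix (Fin m) (Fin m) ℝ) - γ • SD) *ᵥ (fun l => (x l).re) = 0 := by
        funext k
        have h2 := mulVec_map_re ((1 : Matrix (Fin m) (Fin m) ℝ) - γ • SD) x k
        rw [congrFun hNx0' k] at h2
        simpa using h2.symm
      have him : ((1 : Matrix (Fin m) (Fin m) ℝ) - γ • SD) *ᵥ (fun l => (x l).im) = 0 := by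
        funext k
        have h2 := mulVec_map_im ((1 : Matrix (Fin m) (Fin m) ℝ) - γ • SD) x k
        rw [congrFun hNx0' k] at h2
        simpa using h2.symm
      have hxre := hblock_ker γ _ hre
      have hxim := hblock_ker γ _ him
      apply hx0
      funext k
      exact Complex.ext (by simpa using congrFun hxre k) (by simpa using congrFun hxim k)
    · set z : Fin m → ℂ := ν⁻¹ • x with hz
      have hxz : x = ν • z := by rw [hz, smul_smul, mul_inv_cancel₀ hν0, one_smul]
      have hNz : NC *ᵥ z = fun _ => (1:ℂ) := by
        rw [hz, Matrix.mulVec_smul, hNx]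
        funext k
        simp only [Pi.smul_apply, smul_eq_mul]
        exact inv_mul_cancel₀ hν0
      have hNz' : (((1 : Matrix (Fin m) (Fin m) ℝ) - γ • SD).map Complex.ofReal) *ᵥ z
          = fun _ => (1:ℂ) := by
        rw [← hNCmap]; exact hNz
      set zre : Fin m → ℝ := fun k => (z k).re with hzre
      set zim : Fin m → ℝ := fun k => (z k).im with hzim
      have hre : ((1 : Matrix (Fin m) (Fin m) ℝ) - γ • SD) *ᵥ zre = eVec m := by
        funext k
        have h2 := mulVec_map_re ((1 : Matrix (Fin m) (Fin m) ℝ) - γ • SD) z k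
        rw [congrFun hNz' k] at h2
        simpa [eVec] using h2.symm
      have him : ((1 : Matrix (Fin m) (Fin m) ℝ) - γ • SD) *ᵥ zim = 0 := by
        funext k
        have h2 := mulVec_map_im ((1 : Matrix (Fin m) (Fin m) ℝ) - γ • SD) z k
        rw [congrFun hNz' k] at h2
        simpa using h2.symm
      have hzim0 : zim = 0 := hblock_ker γ _ him
      have hzc : ∀ l, z l = ((zre l : ℝ) : ℂ) := by
        intro l
        refine Complex.ext rfl ?_
        simpa using congrFun hzim0 l
      have hzre0 : zre ≠ 0 := by
        intro h
        have hz0 : z = 0 := by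
          funext k
          rw [hzc k, congrFun h k]
          simp
        have k0 : Fin m := ⟨0, by omega⟩
        have h1 := congrFun hNz k0
        rw [hz0, Matrix.mulVec_zero] at h1
        exact one_ne_zero h1.symm
      set w : ℝ := zre ⬝ᵥ (D *ᵥ zre) with hwdef
      have hwsum : w = ∑ k, d k * zre k ^ 2 := by
        rw [hwdef]
        simp only [dotProduct, Matrix.mulVec_diagonal, D]
        apply Finset.sum_congr rfl
        intro k _
        ring
      have hwpos : 0 < w := by
        rw [hwsum]
        obtain ⟨k, hk⟩ := Function.ne_iff.mp hzre0
        apply Finset.sum_pos' (fun k _ => mul_nonneg (le_of_lt (hd k)) (sq_nonneg _))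
        refine ⟨k, Finset.mem_univ k, ?_⟩
        have : zre k ≠ 0 := by simpa using hk
        have h2 : 0 < zre k ^ 2 := by positivity
        exact mul_pos (hd k) h2
      have hSDdot : (SD *ᵥ zre) ⬝ᵥ (D *ᵥ zre) = 0 := by
        rw [hSD]
        exact SD_dot_D (Smat m) hSkew d zre
      have hew : eVec m ⬝ᵥ (D *ᵥ zre) = w := by
        rw [← hre, Matrix.sub_mulVec, Matrix.one_mulVec, smul_mulVec,
          sub_dotProduct, smul_dotProduct, hSDdot, smul_zero, sub_zero, hwdef]
      have hsum_ew : ∑ l, d l * zre l = w := by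
        rw [← hew]
        simp only [dotProduct, Matrix.mulVec_diagonal, eVec, D]
        apply Finset.sum_congr rfl
        intro l _
        ring
      have hcw : c = ν * (w : ℂ) := by
        rw [hc]
        have e1 : ∀ l, ((d l : ℝ) : ℂ) * x l = ν * (((d l * zre l : ℝ)) : ℂ) := by
          intro l
          rw [hxz]
          simp only [Pi.smul_apply, smul_eq_mul, hzc l]
          push_cast
          ring
        rw [Finset.sum_congr rfl (fun l _ => e1 l), ← Finset.mul_sum]
        congr 1
        rw [← Complex.ofReal_sum]
        exact_mod_cast congrArg (fun r : ℝ => (r : ℂ)) hsum_ew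
      have hfin : (1 : ℂ) - lam = ((γ * 2⁻¹ * w : ℝ) : ℂ) := by
        have h1 : (1 - lam) * ν = (γ : ℂ) * 2⁻¹ * c := by
          rw [hν, ← mul_assoc, mul_inv_cancel₀ hlam1', one_mul]
        rw [hcw] at h1
        have h2 : ν * ((1 - lam) - (γ : ℂ) * 2⁻¹ * (w : ℂ)) = 0 := by
          linear_combination h1
        rcases mul_eq_zero.mp h2 with h | h
        · exact absurd h hν0
        · have h3 := sub_eq_zero.mp h
          rw [h3]
          rw [Complex.ofReal_mul, Complex.ofReal_mul]
          norm_num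
      have hlamval : lam = 1 - ((γ * 2⁻¹ * w : ℝ) : ℂ) := by
        linear_combination -hfin
      constructor
      · rw [hlamval]
        simp [Complex.sub_im, Complex.one_im, Complex.ofReal_im]
      · rw [hlamval]
        simp only [Complex.sub_re, Complex.one_re, Complex.ofReal_re]
        have h1 : γ * 2⁻¹ < 0 := mul_neg_of_neg_of_pos hγ (by norm_num)
        have h2 : γ * 2⁻¹ * w < 0 := mul_neg_of_neg_of_pos h1 hwpos
        linarith
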